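/- arXiv:1604.03224 — 2 statements merged into one kernel-verified Lean document; each statement's English description precedes it below -/
import Mathlib

section
/- Let p be a prime and assume λ is multiplicative and r(p) > 0. Then: (i) ξ_1(1) = 1; (ii) ξ_p(p) = r(p)^{-1/2}; (iii) ξ_p(1) = (−λ(p)/(√p·(1 + χ(p)/p))) · ξ_p(p); and for every integer ν ≥ 2: (iv) ξ_{p^ν}(p^ν) = ( r(p)·(1 − χ(p)/p²) )^{-1/2}; (v) ξ_{p^ν}(p^{ν−1}) = (−λ(p)/√p) · ξ_{p^ν}(p^ν); (vi) ξ_{p^ν}(p^{ν−2}) = (χ(p)/p) · ξ_{p^ν}(p^ν). -/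
open scoped BigOperators
open Finset

noncomputable section

/-- A multiplicative arithmetic function: `λ(1) = 1` and
`λ(ab) = λ(a)λ(b)` whenever `gcd(a,b) = 1`. -/
def IsMult (lam : ℕ → ℝ) : Prop :=
  lam 1 = 1 ∧ ∀ a b : ℕ, Nat.Coprime a b → lam (a * b) = lam a * lam b

/-- The trivial character mod `M`: `χ(n) = 1` if `gcd(n,M) = 1`, else `0`. -/
def chi (M n : ℕ) : ℝ := if Nat.gcd n M = 1 then 1 else 0

/-- `σ(b) = Σ_{r | b} χ(r)/r` (twisted divisor sum). -/
def sigTw (M b : ℕ) : ℝ := ∑ r ∈ b.divisors, chi M r / r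

/-- `r(c) = Σ_{b | c} μ(b)λ(b)² / (b σ(b)²)`. -/
def rF (M : ℕ) (lam : ℕ → ℝ) (c : ℕ) : ℝ :=
  ∑ b ∈ c.divisors,
    (ArithmeticFunction.moebius b : ℝ) * (lam b) ^ 2 / (b * (sigTw M b) ^ 2)

/-- `α(c) = Σ_{b | c} χ(b)μ(b)/b²`. -/
def alphaF (M c : ℕ) : ℝ :=
  ∑ b ∈ c.divisors, chi M b * (ArithmeticFunction.moebius b : ℝ) / (b : ℝ) ^ 2

/-- `β(c) = Σ_{b | c} χ(b)μ(b)²/b`. -/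
def betaF (M c : ℕ) : ℝ :=
  ∑ b ∈ c.divisors, chi M b * (ArithmeticFunction.moebius b : ℝ) ^ 2 / b

/-- The multiplicative function `μ_λ` determined by `μ_λ(p) = -λ(p)`,
`μ_λ(p²) = χ(p)`, `μ_λ(p^j) = 0` for `j ≥ 3`. -/
def muLam (M : ℕ) (lam : ℕ → ℝ) (d : ℕ) : ℝ :=
  ∏ p ∈ d.primeFactors,
    (if d.factorization p = 1 then -lam p
     else if d.factorization p = 2 then chi M p else 0)

/-- The squarefree part `d₁` of `d`. -/
def sfPart (d : ℕ) : ℕ :=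
  ∏ p ∈ d.primeFactors, if d.factorization p = 1 then p else 1

/-- The squarefull part `d₂` of `d`. -/
def ffPart (d : ℕ) : ℕ :=
  ∏ p ∈ d.primeFactors, if d.factorization p = 1 then 1 else p ^ d.factorization p

/-- `ξ'_{d₁}(g) = μ(d₁/g)λ(d₁/g) / (r(d₁)^{1/2} (d₁/g)^{1/2} β(d₁/g))` for `g ∣ d₁`. -/
def xi' (M : ℕ) (lam : ℕ → ℝ) (d₁ g : ℕ) : ℝ :=
  (ArithmeticFunction.moebius (d₁ / g) : ℝ) * lam (d₁ / g) /
    (Real.sqrt (rF M lam d₁) * Real.sqrt ((d₁ / g : ℕ) : ℝ) * betaF M (d₁ / g))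

/-- `ξ''_{d₂}(g) = μ_λ(d₂/g) / ((d₂/g)^{1/2} (r(d₂)α(d₂))^{1/2})` for `g ∣ d₂`. -/
def xi'' (M : ℕ) (lam : ℕ → ℝ) (d₂ g : ℕ) : ℝ :=
  muLam M lam (d₂ / g) /
    (Real.sqrt ((d₂ / g : ℕ) : ℝ) * Real.sqrt (rF M lam d₂ * alphaF M d₂))

/-- `ξ_d(ℓ) = ξ'_{d₁}(gcd(d₁,ℓ)) ξ''_{d₂}(gcd(d₂,ℓ))`. -/
def xi (M : ℕ) (lam : ℕ → ℝ) (d ℓ : ℕ) : ℝ :=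
  xi' M lam (sfPart d) (Nat.gcd (sfPart d) ℓ) *
    xi'' M lam (ffPart d) (Nat.gcd (ffPart d) ℓ)


-- aux lemmas
lemma chi_one (M : ℕ) : chi M 1 = 1 := by simp [chi]

lemma sigTw_one (M : ℕ) : sigTw M 1 = 1 := by simp [sigTw, chi_one]

lemma rF_one (M : ℕ) (lam : ℕ → ℝ) (h1 : lam 1 = 1) : rF M lam 1 = 1 := by
  simp [rF, sigTw_one, h1]

lemma alphaF_one (M : ℕ) : alphaF M 1 = 1 := by simp [alphaF, chi_one]

lemma betaF_one (M : ℕ) : betaF M 1 = 1 := by simp [betaF, chi_one]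

lemma betaF_prime (M : ℕ) {p : ℕ} (hp : p.Prime) :
    betaF M p = 1 + chi M p / p := by
  rw [betaF, hp.divisors, Finset.sum_insert (by simp [hp.ne_one, Ne.symm hp.ne_one]),
    Finset.sum_singleton, ArithmeticFunction.moebius_apply_prime hp]
  simp [chi_one]

lemma sum_pp {p : ℕ} (hp : p.Prime) {ν : ℕ} (hν : 1 ≤ ν) (g : ℕ → ℝ)
    (hg : ∀ i, 2 ≤ i → g (p ^ i) = 0) :
    ∑ b ∈ (p ^ ν).divisors, g b = g 1 + g p := by
  rw [Nat.sum_divisors_prime_pow hp]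
  rw [← Finset.sum_subset (Finset.range_subset_range.2 (by omega) : Finset.range 2 ⊆ Finset.range (ν+1))
    (fun i _ hi => hg i (by simp at hi; omega))]
  simp [Finset.sum_range_succ]

lemma rF_pp (M : ℕ) (lam : ℕ → ℝ) {p : ℕ} (hp : p.Prime) {ν : ℕ} (hν : 1 ≤ ν) :
    rF M lam (p ^ ν) = rF M lam p := by
  have hg : ∀ i, 2 ≤ i → (ArithmeticFunction.moebius (p^i) : ℝ) * (lam (p^i)) ^ 2 /
      ((p^i : ℕ) * (sigTw M (p^i)) ^ 2) = 0 := fun i hi => by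
    rw [ArithmeticFunction.moebius_apply_prime_pow hp (by omega), if_neg (by omega : ¬ i = 1)]
    simp
  have h1 := sum_pp hp hν (fun b => (ArithmeticFunction.moebius b : ℝ) * (lam b) ^ 2 /
      ((b : ℕ) * (sigTw M b) ^ 2)) hg
  have h2 := sum_pp hp (le_refl 1) (fun b => (ArithmeticFunction.moebius b : ℝ) * (lam b) ^ 2 /
      ((b : ℕ) * (sigTw M b) ^ 2)) hg
  simp only [pow_one] at h2
  rw [rF, h1, rF, h2]

lemma alphaF_pp (M : ℕ) {p : ℕ} (hp : p.Prime) {ν : ℕ} (hν : 1 ≤ ν) :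
    alphaF M (p ^ ν) = 1 - chi M p / (p : ℝ) ^ 2 := by
  have hg : ∀ i, 2 ≤ i → chi M (p^i) * (ArithmeticFunction.moebius (p^i) : ℝ) /
      ((p^i : ℕ) : ℝ) ^ 2 = 0 := fun i hi => by
    rw [ArithmeticFunction.moebius_apply_prime_pow hp (by omega), if_neg (by omega : ¬ i = 1)]
    simp
  rw [alphaF, sum_pp hp hν _ hg, ArithmeticFunction.moebius_apply_prime hp, chi_one]
  push_cast
  ring_nf
  rw [chi]
  split <;> simp

lemma muLam_one (M : ℕ) (lam : ℕ → ℝ) : muLam M lam 1 = 1 := by simp [muLam]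

lemma muLam_prime (M : ℕ) (lam : ℕ → ℝ) {p : ℕ} (hp : p.Prime) :
    muLam M lam p = -lam p := by
  simp [muLam, hp.primeFactors, hp.factorization_self]

lemma muLam_sq (M : ℕ) (lam : ℕ → ℝ) {p : ℕ} (hp : p.Prime) :
    muLam M lam (p ^ 2) = chi M p := by
  simp [muLam, Nat.primeFactors_prime_pow (k:=2) (by norm_num) hp, hp.factorization_pow,
    Finsupp.single_eq_same]

lemma sfPart_one : sfPart 1 = 1 := by simp [sfPart]
lemma ffPart_one : ffPart 1 = 1 := by simp [ffPart]

lemma sfPart_prime {p : ℕ} (hp : p.Prime) : sfPart p = p := by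
  simp [sfPart, hp.primeFactors, hp.factorization_self]

lemma ffPart_prime {p : ℕ} (hp : p.Prime) : ffPart p = 1 := by
  simp [ffPart, hp.primeFactors, hp.factorization_self]

lemma sfPart_pp {p : ℕ} (hp : p.Prime) {ν : ℕ} (hν : 2 ≤ ν) : sfPart (p ^ ν) = 1 := by
  simp [sfPart, Nat.primeFactors_prime_pow (k:=ν) (by omega) hp, hp.factorization_pow,
    Finsupp.single_eq_same, (by omega : ν ≠ 1)]
  omega

lemma ffPart_pp {p : ℕ} (hp : p.Prime) {ν : ℕ} (hν : 2 ≤ ν) : ffPart (p ^ ν) = p ^ ν := by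
  simp [ffPart, Nat.primeFactors_prime_pow (k:=ν) (by omega) hp, hp.factorization_pow,
    Finsupp.single_eq_same, (by omega : ν ≠ 1)]
  omega

/-- Explicit values of `ξ` at prime powers: if `p` is prime,
`λ` is multiplicative and `r(p) > 0`, then `ξ_1(1) = 1`, `ξ_p(p) = r(p)^{-1/2}`,
`ξ_p(1) = (-λ(p)/(√p(1 + χ(p)/p))) ξ_p(p)`, and for all `ν ≥ 2`:
`ξ_{p^ν}(p^ν) = (r(p)(1 - χ(p)/p²))^{-1/2}`,
`ξ_{p^ν}(p^{ν-1}) = (-λ(p)/√p) ξ_{p^ν}(p^ν)`, and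
`ξ_{p^ν}(p^{ν-2}) = (χ(p)/p) ξ_{p^ν}(p^ν)`. -/
theorem xi_prime_power_values (M : ℕ) (hM : 0 < M) (p : ℕ) (hp : p.Prime)
    (lam : ℕ → ℝ) (hmult : IsMult lam) (hr : 0 < rF M lam p) :
    xi M lam 1 1 = 1 ∧
    xi M lam p p = (Real.sqrt (rF M lam p))⁻¹ ∧
    xi M lam p 1 = (-lam p / (Real.sqrt p * (1 + chi M p / p))) * xi M lam p p ∧
    ∀ ν : ℕ, 2 ≤ ν →
      xi M lam (p ^ ν) (p ^ ν) =
          (Real.sqrt (rF M lam p * (1 - chi M p / (p : ℝ) ^ 2)))⁻¹ ∧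
      xi M lam (p ^ ν) (p ^ (ν - 1)) =
          (-lam p / Real.sqrt p) * xi M lam (p ^ ν) (p ^ ν) ∧
      xi M lam (p ^ ν) (p ^ (ν - 2)) =
          (chi M p / p) * xi M lam (p ^ ν) (p ^ ν) := by

  have h11 : xi M lam 1 1 = 1 := by
    rw [xi, sfPart_one, ffPart_one]
    simp [xi', xi'', rF_one M lam hmult.1, betaF_one, alphaF_one, muLam_one, hmult.1]
  have hpp : xi M lam p p = (Real.sqrt (rF M lam p))⁻¹ := by
    rw [xi, sfPart_prime hp, ffPart_prime hp, Nat.gcd_self, Nat.gcd_one_left]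
    simp [xi', xi'', Nat.div_self hp.pos, rF_one M lam hmult.1, betaF_one, alphaF_one,
      muLam_one, hmult.1]
  refine ⟨h11, hpp, ?_, ?_⟩
  · rw [xi, sfPart_prime hp, ffPart_prime hp, Nat.gcd_one_right, Nat.gcd_one_left, hpp]
    rw [xi', xi'', Nat.div_one, Nat.div_self Nat.one_pos]
    rw [ArithmeticFunction.moebius_apply_prime hp, betaF_prime M hp, muLam_one,
      rF_one M lam hmult.1, alphaF_one]
    push_cast
    simp only [Real.sqrt_one, mul_one, one_mul, Nat.cast_one, div_eq_mul_inv, mul_inv]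
    ring
  · intro ν hν
    have hν1 : 1 ≤ ν := by omega
    have hgcd : ∀ k, k ≤ ν → Nat.gcd (p ^ ν) (p ^ k) = p ^ k := fun k hk =>
      Nat.gcd_eq_right (pow_dvd_pow p hk)
    have hdiv : ∀ k, k ≤ ν → p ^ ν / p ^ k = p ^ (ν - k) := fun k hk =>
      Nat.pow_div hk hp.pos
    have key : ∀ k, k ≤ ν → xi M lam (p ^ ν) (p ^ k) =
        muLam M lam (p ^ (ν - k)) /
          (Real.sqrt ((p : ℝ) ^ (ν - k)) *
            Real.sqrt (rF M lam p * (1 - chi M p / (p : ℝ) ^ 2))) := by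
      intro k hk
      rw [xi, sfPart_pp hp hν, ffPart_pp hp hν, Nat.gcd_one_left, hgcd k hk]
      rw [xi'', hdiv k hk, rF_pp M lam hp hν1, alphaF_pp M hp hν1]
      have : xi' M lam 1 1 = 1 := by
        simp [xi', rF_one M lam hmult.1, betaF_one, hmult.1]
      rw [this, one_mul]
      push_cast
      ring
    have h4 : xi M lam (p ^ ν) (p ^ ν) =
        (Real.sqrt (rF M lam p * (1 - chi M p / (p : ℝ) ^ 2)))⁻¹ := by
      rw [key ν le_rfl, Nat.sub_self, pow_zero, muLam_one]
      norm_num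
    refine ⟨h4, ?_, ?_⟩
    · rw [key (ν - 1) (by omega), (by omega : ν - (ν - 1) = 1), pow_one, muLam_prime M lam hp, h4]
      simp only [div_eq_mul_inv, mul_inv]
      ring
    · rw [key (ν - 2) (by omega), (by omega : ν - (ν - 2) = 2), muLam_sq M lam hp, h4,
        Real.sqrt_sq (by positivity : (0:ℝ) ≤ (p:ℝ))]
      simp only [div_eq_mul_inv, mul_inv]
      ring

end
end

section
/- For every positive integer N, φ(N)·∏_{p prime, p | N} (1 − 1/(p² − p)) ≤ η(N) ≤ φ(N), where φ is the Euler totient function. -/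
open scoped BigOperators
open Finset

noncomputable section

/-- `η(n) = Σ_{LM = n} μ(L) · M · ∏_{p² ∣ M} (1 - 1/p²)`, the sum running over
all ordered factorizations `n = L·M` and the product over primes `p` with
`p² ∣ M`, as a real number. -/
def eta (n : ℕ) : ℝ :=
  ∑ L ∈ n.divisors,
    (ArithmeticFunction.moebius L : ℝ) * (n / L : ℕ) *
      ∏ p ∈ (n / L).primeFactors.filter (fun p => p ^ 2 ∣ n / L),
        (1 - 1 / (p : ℝ) ^ 2)

/-- The auxiliary multiplicative function `F(n) = n ∏_{p² ∣ n} (1 - 1/p²)`. -/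
def Ffun : ArithmeticFunction ℝ :=
  ⟨fun n => n * ∏ p ∈ n.primeFactors.filter (fun p => p ^ 2 ∣ n), (1 - 1 / (p : ℝ) ^ 2),
    by simp⟩

lemma Ffun_apply (n : ℕ) :
    Ffun n = n * ∏ p ∈ n.primeFactors.filter (fun p => p ^ 2 ∣ n), (1 - 1 / (p : ℝ) ^ 2) :=
  rfl

lemma Ffun_mult : Ffun.IsMultiplicative := by
  constructor
  · simp [Ffun_apply]
  · intro m n h
    rcases eq_or_ne m 0 with rfl | hm
    · simp [Ffun_apply]
    rcases eq_or_ne n 0 with rfl | hn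
    · simp [Ffun_apply]
    simp only [Ffun_apply]
    have hPF : (m * n).primeFactors = m.primeFactors ∪ n.primeFactors :=
      Nat.primeFactors_mul hm hn
    have hdisj : Disjoint m.primeFactors n.primeFactors := Nat.Coprime.disjoint_primeFactors h
    have hm' : ∀ p ∈ m.primeFactors, (p ^ 2 ∣ m * n ↔ p ^ 2 ∣ m) := by
      intro p hp
      have hpn : Nat.Coprime (p ^ 2) n :=
        Nat.Coprime.pow_left _ (Nat.Coprime.coprime_dvd_left (Nat.dvd_of_mem_primeFactors hp) h)
      exact ⟨fun hd => (Nat.Coprime.dvd_of_dvd_mul_right hpn) hd,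
        fun hd => hd.trans (dvd_mul_right m n)⟩
    have hn' : ∀ p ∈ n.primeFactors, (p ^ 2 ∣ m * n ↔ p ^ 2 ∣ n) := by
      intro p hp
      have hpm : Nat.Coprime (p ^ 2) m :=
        Nat.Coprime.pow_left _
          (Nat.Coprime.coprime_dvd_left (Nat.dvd_of_mem_primeFactors hp) h.symm)
      exact ⟨fun hd => (Nat.Coprime.dvd_of_dvd_mul_left hpm) hd,
        fun hd => hd.trans (dvd_mul_left n m)⟩
    have e1 : m.primeFactors.filter (fun p => p ^ 2 ∣ m * n)
        = m.primeFactors.filter (fun p => p ^ 2 ∣ m) := Finset.filter_congr hm'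
    have e2 : n.primeFactors.filter (fun p => p ^ 2 ∣ m * n)
        = n.primeFactors.filter (fun p => p ^ 2 ∣ n) := Finset.filter_congr hn'
    rw [hPF, Finset.filter_union, e1, e2,
      Finset.prod_union (Finset.disjoint_filter_filter hdisj)]
    push_cast
    ring

/-- `G = μ * F` (Dirichlet convolution). -/
def Gfun : ArithmeticFunction ℝ :=
  (ArithmeticFunction.moebius : ArithmeticFunction ℝ) * Ffun

lemma Gfun_mult : Gfun.IsMultiplicative :=
  (ArithmeticFunction.isMultiplicative_moebius.intCast).mul Ffun_mult

lemma eta_eq (n : ℕ) : eta n = Gfun n := by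
  rw [Gfun, ArithmeticFunction.mul_apply,
    Nat.sum_divisorsAntidiagonal
      (f := fun a b => ((ArithmeticFunction.moebius : ArithmeticFunction ℝ)) a * Ffun b)]
  unfold eta
  refine Finset.sum_congr rfl fun L hL => ?_
  simp [Ffun_apply, mul_assoc]

lemma Ffun_prime_pow {p : ℕ} (hp : p.Prime) (k : ℕ) :
    Ffun (p ^ k) =
      if k = 0 then 1 else if k = 1 then (p : ℝ)
      else (p : ℝ) ^ k * (1 - 1 / (p : ℝ) ^ 2) := by
  rcases eq_or_ne k 0 with rfl | hk
  · simp [Ffun_apply]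
  rw [Ffun_apply, Nat.primeFactors_prime_pow hk hp]
  have hdvd : ∀ l : ℕ, (p ^ 2 ∣ p ^ l ↔ 2 ≤ l) := fun l =>
    Nat.pow_dvd_pow_iff_le_right hp.one_lt
  rcases eq_or_ne k 1 with rfl | hk1
  · have hnd : ¬ p ^ 2 ∣ p ^ 1 := by rw [hdvd 1]; omega
    simp only [Finset.filter_singleton, hnd, if_false, Finset.prod_empty, mul_one]
    norm_num
  · have h2 : p ^ 2 ∣ p ^ k := (hdvd k).mpr (by omega)
    simp only [Finset.filter_singleton, h2, if_true, Finset.prod_singleton]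
    rw [if_neg hk, if_neg hk1]
    push_cast
    ring

lemma Gfun_prime_pow {p : ℕ} (hp : p.Prime) {k : ℕ} (hk : k ≠ 0) :
    Gfun (p ^ k) = Ffun (p ^ k) - Ffun (p ^ (k - 1)) := by
  rw [Gfun, ArithmeticFunction.mul_apply,
    Nat.sum_divisorsAntidiagonal
      (f := fun a b => ((ArithmeticFunction.moebius : ArithmeticFunction ℝ)) a * Ffun b),
    Nat.sum_divisors_prime_pow hp]
  have hsub : ({0, 1} : Finset ℕ) ⊆ Finset.range (k + 1) := by
    intro x hx
    simp only [Finset.mem_insert, Finset.mem_singleton] at hx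
    simp only [Finset.mem_range]
    omega
  rw [← Finset.sum_subset hsub]
  · rw [Finset.sum_pair (by norm_num : (0 : ℕ) ≠ 1)]
    have h0 : p ^ k / p ^ 0 = p ^ k := by simp
    have h1 : p ^ k / p ^ 1 = p ^ (k - 1) := by
      rw [Nat.pow_div (by omega) hp.pos]
    have hμ0 : ((ArithmeticFunction.moebius : ArithmeticFunction ℝ)) (p ^ 0) = 1 := by
      simp [ArithmeticFunction.intCoe_apply]
    have hμ1 : ((ArithmeticFunction.moebius : ArithmeticFunction ℝ)) (p ^ 1) = -1 := by
      rw [ArithmeticFunction.intCoe_apply, pow_one,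
        ArithmeticFunction.moebius_apply_prime hp]
      norm_num
    rw [h0, h1, hμ0, hμ1]
    ring
  · intro x hx hx'
    simp only [Finset.mem_insert, Finset.mem_singleton, not_or] at hx'
    have hμ : ArithmeticFunction.moebius (p ^ x) = 0 := by
      rw [ArithmeticFunction.moebius_apply_prime_pow hp hx'.1, if_neg hx'.2]
    simp [ArithmeticFunction.intCoe_apply, hμ]

lemma key_bound {p k : ℕ} (hp : p.Prime) (hk : k ≠ 0) :
    (Nat.totient (p ^ k) : ℝ) * (1 - 1 / ((p : ℝ) ^ 2 - p)) ≤ Gfun (p ^ k) ∧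
      Gfun (p ^ k) ≤ (Nat.totient (p ^ k) : ℝ) := by
  have hP : (2 : ℝ) ≤ (p : ℝ) := by exact_mod_cast hp.two_le
  have hP0 : (0 : ℝ) < (p : ℝ) := by linarith
  have hPne : (p : ℝ) ≠ 0 := ne_of_gt hP0
  have hPP : (0 : ℝ) < (p : ℝ) ^ 2 - p := by nlinarith
  have hPPne : (p : ℝ) ^ 2 - p ≠ 0 := ne_of_gt hPP
  have hfac_le : 1 - 1 / ((p : ℝ) ^ 2 - p) ≤ 1 - 1 / (p : ℝ) ^ 2 := by
    have h1 : (p : ℝ) ^ 2 - p ≤ (p : ℝ) ^ 2 := by linarith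
    have := one_div_le_one_div_of_le hPP h1
    linarith
  have hfac_nonneg : (0 : ℝ) ≤ 1 - 1 / ((p : ℝ) ^ 2 - p) := by
    have h2 : (1 : ℝ) ≤ (p : ℝ) ^ 2 - p := by nlinarith
    have : 1 / ((p : ℝ) ^ 2 - p) ≤ 1 := by
      rw [div_le_one hPP]; exact h2
    linarith
  have hfac1 : 1 - 1 / (p : ℝ) ^ 2 ≤ 1 := by
    have : (0 : ℝ) < 1 / (p : ℝ) ^ 2 := by positivity
    linarith
  have hφ : (Nat.totient (p ^ k) : ℝ) = (p : ℝ) ^ (k - 1) * ((p : ℝ) - 1) := by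
    rw [Nat.totient_prime_pow hp (Nat.pos_of_ne_zero hk)]
    push_cast [Nat.cast_sub hp.one_le]
    ring
  rw [Gfun_prime_pow hp hk, hφ]
  rcases eq_or_ne k 1 with rfl | hk1
  · have e0 : Ffun (p ^ (1 - 1)) = 1 := by rw [Ffun_prime_pow hp]; norm_num
    have e1 : Ffun (p ^ 1) = (p : ℝ) := by rw [Ffun_prime_pow hp]; norm_num
    have e2 : ((p : ℝ)) ^ (1 - 1) = 1 := by norm_num
    rw [e0, e1, e2, one_mul]
    exact ⟨mul_le_of_le_one_right (by linarith) (le_trans hfac_le hfac1), le_refl _⟩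
  rcases eq_or_ne k 2 with rfl | hk2
  · have e0 : Ffun (p ^ (2 - 1)) = (p : ℝ) := by rw [Ffun_prime_pow hp]; norm_num
    have e1 : Ffun (p ^ 2) = (p : ℝ) ^ 2 * (1 - 1 / (p : ℝ) ^ 2) := by
      rw [Ffun_prime_pow hp]; norm_num
    have e2 : ((p : ℝ)) ^ (2 - 1) = (p : ℝ) := by norm_num
    rw [e0, e1, e2]
    have f1 : (p : ℝ) ^ 2 * (1 - 1 / (p : ℝ) ^ 2) - (p : ℝ) = (p : ℝ) ^ 2 - p - 1 := by
      field_simp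
      ring
    have f2 : (p : ℝ) * ((p : ℝ) - 1) * (1 - 1 / ((p : ℝ) ^ 2 - p))
        = (p : ℝ) ^ 2 - p - 1 := by
      rw [show (p : ℝ) * ((p : ℝ) - 1) = (p : ℝ) ^ 2 - p by ring, mul_sub, mul_one,
        mul_one_div_cancel hPPne]
    rw [f1, f2]
    exact ⟨le_refl _, by nlinarith⟩
  · have hk3 : 3 ≤ k := by omega
    rw [Ffun_prime_pow hp k, Ffun_prime_pow hp (k - 1),
      if_neg hk, if_neg hk1, if_neg (by omega : k - 1 ≠ 0), if_neg (by omega : k - 1 ≠ 1)]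
    have hPk : (p : ℝ) ^ k = (p : ℝ) ^ (k - 1) * p := by
      rw [← pow_succ]
      congr 1
      omega
    have hG : (p : ℝ) ^ k * (1 - 1 / (p : ℝ) ^ 2)
          - (p : ℝ) ^ (k - 1) * (1 - 1 / (p : ℝ) ^ 2)
        = (p : ℝ) ^ (k - 1) * ((p : ℝ) - 1) * (1 - 1 / (p : ℝ) ^ 2) := by
      rw [hPk]; ring
    rw [hG]
    have hbase : (0 : ℝ) ≤ (p : ℝ) ^ (k - 1) * ((p : ℝ) - 1) := by
      have : (0 : ℝ) < (p : ℝ) ^ (k - 1) := pow_pos hP0 _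
      nlinarith
    constructor
    · exact mul_le_mul_of_nonneg_left hfac_le hbase
    · exact mul_le_of_le_one_right hbase hfac1

/-- For every positive integer `N`,
`φ(N) ∏_{p ∣ N} (1 - 1/(p² - p)) ≤ η(N) ≤ φ(N)`. -/
theorem eta_bounds (N : ℕ) (hN : 0 < N) :
    (Nat.totient N : ℝ) * ∏ p ∈ N.primeFactors, (1 - 1 / ((p : ℝ) ^ 2 - p)) ≤
        eta N ∧
      eta N ≤ (Nat.totient N : ℝ) := by
  have hη : eta N = ∏ p ∈ N.primeFactors, Gfun (p ^ N.factorization p) := by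
    rw [eta_eq, Gfun_mult.multiplicative_factorization _ hN.ne',
      Nat.prod_factorization_eq_prod_primeFactors]
  have hφ : (Nat.totient N : ℝ) =
      ∏ p ∈ N.primeFactors, (Nat.totient (p ^ N.factorization p) : ℝ) := by
    rw [← Nat.cast_prod]
    congr 1
    conv_lhs => rw [Nat.totient_eq_prod_factorization hN.ne',
      Nat.prod_factorization_eq_prod_primeFactors]
    refine Finset.prod_congr rfl fun p hp => ?_
    rw [Nat.totient_prime_pow (Nat.prime_of_mem_primeFactors hp)
      (Nat.Prime.factorization_pos_of_dvd (Nat.prime_of_mem_primeFactors hp) hN.ne'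
        (Nat.dvd_of_mem_primeFactors hp))]
  have hkey : ∀ p ∈ N.primeFactors,
      (Nat.totient (p ^ N.factorization p) : ℝ) * (1 - 1 / ((p : ℝ) ^ 2 - p)) ≤
          Gfun (p ^ N.factorization p) ∧
        Gfun (p ^ N.factorization p) ≤ (Nat.totient (p ^ N.factorization p) : ℝ) := by
    intro p hp
    have hpp := Nat.prime_of_mem_primeFactors hp
    exact key_bound hpp
      (Nat.Prime.factorization_pos_of_dvd hpp hN.ne' (Nat.dvd_of_mem_primeFactors hp)).ne'
  have hnonneg : ∀ p ∈ N.primeFactors,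
      0 ≤ (Nat.totient (p ^ N.factorization p) : ℝ) * (1 - 1 / ((p : ℝ) ^ 2 - p)) := by
    intro p hp
    have hpp := Nat.prime_of_mem_primeFactors hp
    have hP : (2 : ℝ) ≤ (p : ℝ) := by exact_mod_cast hpp.two_le
    have hPP : (0 : ℝ) < (p : ℝ) ^ 2 - p := by nlinarith
    have h2 : (1 : ℝ) ≤ (p : ℝ) ^ 2 - (p : ℝ) := by nlinarith
    have hf : 0 ≤ 1 - 1 / ((p : ℝ) ^ 2 - p) := by
      have : 1 / ((p : ℝ) ^ 2 - p) ≤ 1 := by rw [div_le_one hPP]; exact h2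
      linarith
    positivity
  constructor
  · rw [hη, hφ, ← Finset.prod_mul_distrib]
    exact Finset.prod_le_prod hnonneg fun p hp => (hkey p hp).1
  · rw [hη, hφ]
    refine Finset.prod_le_prod ?_ fun p hp => (hkey p hp).2
    intro p hp
    exact le_trans (hnonneg p hp) (hkey p hp).1

end
end
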